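/- Let k be a field, let s and t be positive integers, and let f ∈ k[x] be an irreducible polynomial with f(0) ≠ 0. Then the k[x]-module k[x]/x^s ⊗ k[x]/f^t is isomorphic to the direct sum of t·deg(f) copies of k[x]/x^s. -/

import Mathlib

set_option maxHeartbeats 1000000


open Polynomial TensorProduct

/-- The `k`-linear operator on the `k[x]`-module `k[x]/(h)` given by the action of `x`,
i.e. multiplication by `x`. -/
noncomputable def mulXop (k : Type*) [Field k] (h : k[X]) :
    (k[X] ⧸ Ideal.span {h}) →ₗ[k] (k[X] ⧸ Ideal.span {h}) :=
  LinearMap.mulLeft k (Ideal.Quotient.mk (Ideal.span {h}) X)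

/-- Two `k[x]`-modules, presented as vector spaces equipped with the `k`-linear operator
by which `x` acts, are isomorphic iff there is a `k`-linear equivalence intertwining the
two operators. -/
def OpIso {k V W : Type*} [Field k] [AddCommGroup V] [Module k V]
    [AddCommGroup W] [Module k W] (f : V →ₗ[k] V) (g : W →ₗ[k] W) : Prop :=
  ∃ e : V ≃ₗ[k] W, ∀ v, e (f v) = g (e v)

/-- The direct sum of a family of operators, as an operator on the direct sum
(product) of the underlying spaces. -/
def piOp {k : Type*} [Field k] {ι : Type*} {V : ι → Type*} [∀ i, AddCommGroup (V i)]
    [∀ i, Module k (V i)] (f : ∀ i, V i →ₗ[k] V i) : (∀ i, V i) →ₗ[k] (∀ i, V i) :=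
  LinearMap.pi fun i => (f i).comp (LinearMap.proj i)

section Aux

variable {k V W : Type*} [Field k] [AddCommGroup V] [Module k V]
  [AddCommGroup W] [Module k W]

lemma opIso_trans {U : Type*} [AddCommGroup U] [Module k U]
    {f : V →ₗ[k] V} {g : W →ₗ[k] W} {h : U →ₗ[k] U}
    (h1 : OpIso f g) (h2 : OpIso g h) : OpIso f h := by
  obtain ⟨e1, he1⟩ := h1
  obtain ⟨e2, he2⟩ := h2
  exact ⟨e1.trans e2, fun v => by simp [he1, he2]⟩


lemma lm_sum_comp {ι : Type*} {A B C : Type*} [AddCommGroup A] [Module k A]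
    [AddCommGroup B] [Module k B] [AddCommGroup C] [Module k C]
    (t : Finset ι) (f : ι → (B →ₗ[k] C)) (g : A →ₗ[k] B) :
    (∑ i ∈ t, f i) ∘ₗ g = ∑ i ∈ t, (f i) ∘ₗ g := by
  ext v
  simp [LinearMap.sum_apply]

lemma lm_comp_sum {ι : Type*} {A B C : Type*} [AddCommGroup A] [Module k A]
    [AddCommGroup B] [Module k B] [AddCommGroup C] [Module k C]
    (t : Finset ι) (g : B →ₗ[k] C) (f : ι → (A →ₗ[k] B)) :
    g ∘ₗ (∑ i ∈ t, f i) = ∑ i ∈ t, g ∘ₗ (f i) := by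
  ext v
  simp [LinearMap.sum_apply]

lemma tp_map_sum_left {ι : Type*} (t : Finset ι) (f : ι → (V →ₗ[k] V)) (g : W →ₗ[k] W) :
    TensorProduct.map (∑ i ∈ t, f i) g = ∑ i ∈ t, TensorProduct.map (f i) g := by
  classical
  induction t using Finset.induction_on with
  | empty => simp [TensorProduct.map_zero_left]
  | insert _ _ hx ih => simp [Finset.sum_insert hx, TensorProduct.map_add_left, ih]

/-- Core twisting lemma: if `N` is "graded nilpotent" via projections `P i` and `M` is
invertible, then `N ⊗ M` is conjugate to `N ⊗ 1`. -/
lemma aux_twist (N : V →ₗ[k] V) (M : W →ₗ[k] W) (hM : IsUnit M) (s : ℕ)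
    (P : ℕ → (V →ₗ[k] V))
    (hsum : ∑ i ∈ Finset.range s, P i = LinearMap.id)
    (horth : ∀ i j, (P i) ∘ₗ (P j) = if i = j then P i else 0)
    (hPs : P s = 0)
    (hcomm : ∀ i, N ∘ₗ (P i) = (P (i + 1)) ∘ₗ N)
    (hP0 : (P 0) ∘ₗ N = 0) :
    OpIso (TensorProduct.map N M) (TensorProduct.map N (LinearMap.id : W →ₗ[k] W)) := by
  classical
  obtain ⟨u, hu⟩ := hM
  set Q : ℤ → (W →ₗ[k] W) := fun a => ((u ^ a : (W →ₗ[k] W)ˣ) : W →ₗ[k] W) with hQ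
  have hQmul : ∀ a b : ℤ, Q a ∘ₗ Q b = Q (a + b) := by
    intro a b
    rw [← Module.End.mul_eq_comp]
    simp only [hQ, ← Units.val_mul, ← zpow_add]
  have hQ0 : Q 0 = LinearMap.id := by
    simp only [hQ, zpow_zero, Units.val_one, Module.End.one_eq_id]
  have hQ1 : Q 1 = M := by simp only [hQ, zpow_one, hu]
  set S : V ⊗[k] W →ₗ[k] V ⊗[k] W :=
    ∑ i ∈ Finset.range s, TensorProduct.map (P i) (Q i) with hS
  set T : V ⊗[k] W →ₗ[k] V ⊗[k] W :=
    ∑ i ∈ Finset.range s, TensorProduct.map (P i) (Q (-i)) with hT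
  have hmulmap : ∀ (A C : V →ₗ[k] V) (B D : W →ₗ[k] W),
      (TensorProduct.map A B) ∘ₗ (TensorProduct.map C D)
        = TensorProduct.map (A ∘ₗ C) (B ∘ₗ D) := fun A C B D =>
    (TensorProduct.map_comp A B C D).symm
  have hdiag : ∀ (c : ℤ → ℤ) (hc : ∀ i : ℕ, (-(i:ℤ)) + c i = 0 ∨ (c i) + -(i:ℤ) = 0),
      True := fun _ _ => trivial
  -- T ∘ S = id
  have hTS : T ∘ₗ S = LinearMap.id := by
    rw [hT, hS, lm_sum_comp]
    have : ∀ i ∈ Finset.range s,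
        (TensorProduct.map (P i) (Q (-i))) ∘ₗ
          (∑ j ∈ Finset.range s, TensorProduct.map (P j) (Q j))
        = TensorProduct.map (P i) LinearMap.id := by
      intro i hi
      rw [lm_comp_sum]
      have : ∀ j ∈ Finset.range s,
          (TensorProduct.map (P i) (Q (-i))) ∘ₗ (TensorProduct.map (P j) (Q j))
          = if i = j then TensorProduct.map (P i) LinearMap.id else 0 := by
        intro j _
        rw [hmulmap, horth i j, hQmul]
        by_cases h : i = j
        · subst h; simp [hQ0]
        · simp [h, TensorProduct.map_zero_left]
      rw [Finset.sum_congr rfl this, Finset.sum_ite_eq, if_pos hi]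
    rw [Finset.sum_congr rfl this, ← tp_map_sum_left, hsum, TensorProduct.map_id]
  -- S ∘ T = id
  have hST : S ∘ₗ T = LinearMap.id := by
    rw [hT, hS, lm_sum_comp]
    have : ∀ i ∈ Finset.range s,
        (TensorProduct.map (P i) (Q i)) ∘ₗ
          (∑ j ∈ Finset.range s, TensorProduct.map (P j) (Q (-j)))
        = TensorProduct.map (P i) LinearMap.id := by
      intro i hi
      rw [lm_comp_sum]
      have : ∀ j ∈ Finset.range s,
          (TensorProduct.map (P i) (Q i)) ∘ₗ (TensorProduct.map (P j) (Q (-j)))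
          = if i = j then TensorProduct.map (P i) LinearMap.id else 0 := by
        intro j _
        rw [hmulmap, horth i j, hQmul]
        by_cases h : i = j
        · subst h; simp [hQ0]
        · simp [h, TensorProduct.map_zero_left]
      rw [Finset.sum_congr rfl this, Finset.sum_ite_eq, if_pos hi]
    rw [Finset.sum_congr rfl this, ← tp_map_sum_left, hsum, TensorProduct.map_id]
  refine ⟨LinearEquiv.ofLinear T S hTS hST, ?_⟩
  have key : T ∘ₗ (TensorProduct.map N M) = (TensorProduct.map N LinearMap.id) ∘ₗ T := by
    set g : ℕ → (V ⊗[k] W →ₗ[k] V ⊗[k] W) :=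
      fun j => TensorProduct.map ((P j) ∘ₗ N) (Q (1 - (j : ℤ))) with hg
    have hL : T ∘ₗ (TensorProduct.map N M) = ∑ i ∈ Finset.range s, g i := by
      rw [hT, lm_sum_comp]
      refine Finset.sum_congr rfl fun i _ => ?_
      rw [hmulmap, ← hQ1, hQmul, hg]
      congr 2
      ring
    have hR : (TensorProduct.map N LinearMap.id) ∘ₗ T = ∑ i ∈ Finset.range s, g (i + 1) := by
      rw [hT, lm_comp_sum]
      refine Finset.sum_congr rfl fun i _ => ?_
      rw [hmulmap, hcomm i, LinearMap.id_comp, hg]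
      congr 2
      push_cast
      ring
    have hg0 : g 0 = 0 := by
      rw [hg]; simp only [Nat.cast_zero, hP0, TensorProduct.map_zero_left]
    have hgs : g s = 0 := by
      rw [hg]; simp only [hPs, LinearMap.zero_comp, TensorProduct.map_zero_left]
    have h1 := Finset.sum_range_succ' g s
    have h2 := Finset.sum_range_succ g s
    rw [hL, hR]
    rw [h2, hgs, add_zero] at h1
    rw [hg0, add_zero] at h1
    exact h1
  intro v
  exact LinearMap.congr_fun key v

/-- Conjugating `N ⊗ M` to `N ⊗ 1` when `V` has a basis cyclic for `N`. -/
lemma aux_cyclic (N : V →ₗ[k] V) (M : W →ₗ[k] W) (hM : IsUnit M) (s : ℕ)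
    (b : Module.Basis (Fin s) k V)
    (hNb : ∀ j : Fin s, N (b j) = if h : (j : ℕ) + 1 < s then b ⟨(j : ℕ) + 1, h⟩ else 0) :
    OpIso (TensorProduct.map N M) (TensorProduct.map N (LinearMap.id : W →ₗ[k] W)) := by
  classical
  set P : ℕ → (V →ₗ[k] V) := fun i =>
    if h : i < s then (LinearMap.toSpanSingleton k V (b ⟨i, h⟩)) ∘ₗ (b.coord ⟨i, h⟩) else 0
    with hPdef
  have hPb : ∀ (i : ℕ) (h : i < s) (j : Fin s),
      P i (b j) = if (⟨i, h⟩ : Fin s) = j then b ⟨i, h⟩ else 0 := by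
    intro i h j
    simp only [hPdef, dif_pos h, LinearMap.comp_apply, Module.Basis.coord_apply, Module.Basis.repr_self,
      LinearMap.toSpanSingleton_apply]
    rw [Finsupp.single_apply]
    by_cases hij : (⟨i, h⟩ : Fin s) = j
    · rw [if_pos hij.symm, if_pos hij, one_smul]
    · rw [if_neg (fun hc => hij hc.symm), if_neg hij, zero_smul]
  refine aux_twist N M hM s P ?_ ?_ ?_ ?_ ?_
  · -- sum
    apply b.ext
    intro j
    simp only [LinearMap.coe_sum, Finset.sum_apply, LinearMap.id_coe, id_eq]
    rw [← Fin.sum_univ_eq_sum_range (fun i => P i (b j)) s]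
    rw [Finset.sum_eq_single j]
    · rw [hPb _ j.isLt j]; simp
    · intro i _ hij
      rw [hPb _ i.isLt j]
      simp only [Fin.eta]
      rw [if_neg hij]
    · intro h; exact absurd (Finset.mem_univ j) h
  · -- orthogonality
    intro i j
    by_cases hi : i < s
    · by_cases hj : j < s
      · apply b.ext
        intro l
        simp only [LinearMap.comp_apply]
        rw [hPb j hj l]
        by_cases hij : i = j
        · subst hij
          rw [if_pos rfl]
          by_cases hjl : (⟨i, hj⟩ : Fin s) = l
          · rw [if_pos hjl, hPb i hi ⟨i, hj⟩, if_pos rfl, hPb i hi l, if_pos hjl]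
          · rw [if_neg hjl, map_zero, hPb i hi l, if_neg hjl]
        · rw [if_neg hij]
          by_cases hjl : (⟨j, hj⟩ : Fin s) = l
          · rw [if_pos hjl, hPb i hi ⟨j, hj⟩,
              if_neg (by simp only [Fin.mk.injEq]; exact hij), LinearMap.zero_apply]
          · rw [if_neg hjl, map_zero, LinearMap.zero_apply]
      · have hPj : P j = 0 := dif_neg hj
        rw [hPj]
        by_cases hij : i = j
        · subst hij; rw [if_pos rfl, hPj]; simp
        · rw [if_neg hij]; simp
    · have hPi : P i = 0 := dif_neg hi
      rw [hPi]
      by_cases hij : i = j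
      · subst hij; rw [if_pos rfl, hPi]; simp
      · rw [if_neg hij]; simp
  · exact dif_neg (lt_irrefl s)
  · -- commuting
    intro i
    apply b.ext
    intro j
    simp only [LinearMap.comp_apply]
    by_cases hi : i < s
    · rw [hPb i hi j]
      by_cases hij : (⟨i, hi⟩ : Fin s) = j
      · rw [if_pos hij]
        have hval : i = (j : ℕ) := congrArg Fin.val hij
        subst hval
        have hbj : b ⟨(j : ℕ), hi⟩ = b j := by rw [hij]
        rw [hbj, hNb j]
        by_cases h1 : (j : ℕ) + 1 < s
        · rw [dif_pos h1, hPb ((j : ℕ) + 1) h1 ⟨(j : ℕ) + 1, h1⟩, if_pos rfl]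
        · rw [dif_neg h1, map_zero]
      · rw [if_neg hij, map_zero, hNb j]
        by_cases h1 : (j : ℕ) + 1 < s
        · rw [dif_pos h1]
          by_cases h2 : i + 1 < s
          · rw [hPb (i+1) h2 ⟨(j:ℕ)+1, h1⟩]
            rw [if_neg]
            intro hc
            apply hij
            have : i = (j : ℕ) := by
              have := congrArg Fin.val hc
              simpa using this
            exact Fin.ext this
          · have : P (i + 1) = 0 := dif_neg h2
            simp [this]
        · rw [dif_neg h1, map_zero]
    · have hPi : P i = 0 := dif_neg hi
      have hPi1 : P (i + 1) = 0 := by apply dif_neg; omega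
      simp [hPi, hPi1]
  · -- P 0 ∘ N = 0
    apply b.ext
    intro j
    simp only [LinearMap.comp_apply, LinearMap.zero_apply]
    rw [hNb j]
    by_cases h1 : (j : ℕ) + 1 < s
    · rw [dif_pos h1]
      have h0 : (0 : ℕ) < s := by omega
      rw [hPb 0 h0 ⟨(j:ℕ)+1, h1⟩, if_neg]
      intro hc
      have := congrArg Fin.val hc
      simp at this
    · rw [dif_neg h1, map_zero]

/-- `N ⊗ 1` is the direct sum of `dim W` copies of `N`. -/
lemma aux_pi (N : V →ₗ[k] V) {n : ℕ} (bW : Module.Basis (Fin n) k W) :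
    OpIso (TensorProduct.map N (LinearMap.id : W →ₗ[k] W))
      (piOp fun _ : Fin n => N) := by
  classical
  let e : V ⊗[k] W ≃ₗ[k] (Fin n → V) :=
    (TensorProduct.congr (LinearEquiv.refl k V) bW.repr).trans
      ((TensorProduct.finsuppScalarRight k k V (Fin n)).trans
        (Finsupp.linearEquivFunOnFinite k V (Fin n)))
  have he : ∀ (v : V) (w : W) (i : Fin n), e (v ⊗ₜ[k] w) i = bW.repr w i • v := by
    intro v w i
    simp [e, TensorProduct.congr_tmul,
      TensorProduct.finsuppScalarRight_apply_tmul_apply]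
  refine ⟨e, ?_⟩
  intro z
  induction z using TensorProduct.induction_on with
  | zero => simp [piOp]
  | tmul v w =>
    funext i
    rw [TensorProduct.map_tmul]
    simp only [LinearMap.id_coe, id_eq]
    rw [he (N v) w i]
    simp only [piOp, LinearMap.pi_apply, LinearMap.comp_apply, LinearMap.proj_apply]
    rw [he v w i, map_smul]
  | add x y hx hy =>
    rw [map_add, map_add, hx, hy, map_add, map_add]

end Aux

theorem stmt4 {k : Type*} [Field k] (s t : ℕ) (hs : 0 < s) (ht : 0 < t)
    (f : k[X]) (hf : Irreducible f) (hf0 : f.eval 0 ≠ 0) :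
    OpIso (TensorProduct.map (mulXop k (X ^ s)) (mulXop k (f ^ t)))
      (piOp fun _ : Fin (t * f.natDegree) => mulXop k (X ^ s)) := by
  classical
  set N := mulXop k (X ^ s : k[X]) with hN
  set M := mulXop k (f ^ t) with hM
  -- invertibility of M
  have hfX : ¬ f ∣ (X : k[X]) := by
    rintro ⟨g, hg⟩
    have hg0 : g.eval 0 = 0 := by
      have h0 : (0 : k) = f.eval 0 * g.eval 0 := by
        rw [← Polynomial.eval_mul, ← hg, Polynomial.eval_X]
      rcases mul_eq_zero.mp h0.symm with h | h
      · exact absurd h hf0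
      · exact h
    have hXg : X ∣ g := by
      rw [Polynomial.X_dvd_iff, Polynomial.coeff_zero_eq_eval_zero]
      exact hg0
    obtain ⟨h, hh⟩ := hXg
    have hcalc : (X : k[X]) * 1 = X * (f * h) := by
      rw [mul_one]
      calc (X : k[X]) = f * g := hg
      _ = f * (X * h) := by rw [hh]
      _ = X * (f * h) := by ring
    have h1 : (1 : k[X]) = f * h := mul_left_cancel₀ Polynomial.X_ne_zero hcalc
    exact hf.not_isUnit (IsUnit.of_mul_eq_one h h1.symm)
  have hcop : IsCoprime (X : k[X]) (f ^ t) :=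
    (((hf.coprime_iff_not_dvd).mpr hfX).pow_left).symm
  obtain ⟨a, b, hab⟩ := hcop
  set mkw := Ideal.Quotient.mk (Ideal.span {f ^ t}) with hmkw
  have hft0 : mkw (f ^ t) = 0 :=
    Ideal.Quotient.eq_zero_iff_mem.mpr (Ideal.mem_span_singleton_self _)
  have hinv : mkw X * mkw a = 1 := by
    have := congrArg mkw hab
    rw [map_add, map_mul, map_mul, hft0, mul_zero, add_zero, map_one] at this
    rw [mul_comm]
    exact this
  have hMunit : IsUnit M := by
    refine ⟨⟨M, LinearMap.mulLeft k (mkw a), ?_, ?_⟩, rfl⟩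
    · rw [hM]
      show (LinearMap.mulLeft k (mkw X)) * (LinearMap.mulLeft k (mkw a)) = 1
      rw [Module.End.mul_eq_comp, ← LinearMap.mulLeft_mul, hinv, LinearMap.mulLeft_one,
        Module.End.one_eq_id]
    · rw [hM]
      show (LinearMap.mulLeft k (mkw a)) * (LinearMap.mulLeft k (mkw X)) = 1
      rw [Module.End.mul_eq_comp, ← LinearMap.mulLeft_mul, mul_comm, hinv,
        LinearMap.mulLeft_one, Module.End.one_eq_id]
  -- basis of V
  have hXs0 : (X ^ s : k[X]) ≠ 0 := pow_ne_zero s Polynomial.X_ne_zero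
  have hdimV : (X ^ s : k[X]).natDegree = s := Polynomial.natDegree_X_pow s
  let bV : Module.Basis (Fin s) k (k[X] ⧸ Ideal.span {(X : k[X]) ^ s}) :=
    (AdjoinRoot.powerBasis hXs0).basis.reindex (finCongr hdimV)
  have hbV : ∀ j : Fin s, bV j = (Ideal.Quotient.mk (Ideal.span {(X : k[X]) ^ s}) X) ^ (j : ℕ) := by
    intro j
    show ((AdjoinRoot.powerBasis hXs0).basis.reindex (finCongr hdimV)) j
      = (Ideal.Quotient.mk (Ideal.span {(X : k[X]) ^ s}) X) ^ (j : ℕ)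
    rw [Module.Basis.reindex_apply, PowerBasis.basis_eq_pow, AdjoinRoot.powerBasis_gen]
    rfl
  have hNb : ∀ j : Fin s, N (bV j) =
      if h : (j : ℕ) + 1 < s then bV ⟨(j : ℕ) + 1, h⟩ else 0 := by
    intro j
    set c := Ideal.Quotient.mk (Ideal.span {(X : k[X]) ^ s}) X with hc
    rw [hN, hbV j]
    show c * c ^ (j : ℕ) = _
    by_cases h1 : (j : ℕ) + 1 < s
    · rw [dif_pos h1, hbV ⟨(j : ℕ) + 1, h1⟩, ← pow_succ']
    · rw [dif_neg h1]
      have hjs : (j : ℕ) + 1 = s := by omega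
      have : c * c ^ (j : ℕ) = c ^ s := by rw [← pow_succ', hjs]
      rw [this, hc, ← map_pow]
      exact Ideal.Quotient.eq_zero_iff_mem.mpr (Ideal.mem_span_singleton_self _)
  -- basis of W
  have hftne : (f ^ t : k[X]) ≠ 0 := pow_ne_zero t hf.ne_zero
  have hdimW : (f ^ t : k[X]).natDegree = t * f.natDegree := Polynomial.natDegree_pow f t
  let bW : Module.Basis (Fin (t * f.natDegree)) k (k[X] ⧸ Ideal.span {f ^ t}) :=
    (AdjoinRoot.powerBasis hftne).basis.reindex (finCongr hdimW)
  exact opIso_trans (aux_cyclic N M hMunit s bV hNb) (aux_pi N bW)
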